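/- With A, J as above and A_2(t) = t(J − At), the conjugated matrix t^{−J/2} e^{−At} A_2(t) e^{At} t^{J/2} equals tJ for all t > 0; in particular it is Hermitian. -/

import Mathlib

open Matrix
noncomputable section

def matA (N : ℕ) (ν : ℕ → ℂ) : Matrix (Fin N) (Fin N) ℂ :=
  Matrix.of fun i j => if (j : ℕ) = (i : ℕ) + 1 then ν ((i : ℕ) + 1) else 0

def matJ (N : ℕ) : Matrix (Fin N) (Fin N) ℂ :=
  Matrix.diagonal fun i => ((N - 1 - (i : ℕ) : ℕ) : ℂ)

/-- `t^(J/2)`: diagonal with entries `t^((N-1-i)/2)`. -/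
def tJhalf (N : ℕ) (t : ℝ) : Matrix (Fin N) (Fin N) ℂ :=
  Matrix.diagonal fun i => (t : ℂ) ^ ((((N - 1 - (i : ℕ) : ℕ) : ℂ)) / 2)

/-- `t^(-J/2)`: diagonal with entries `t^(-(N-1-i)/2)`. -/
def tJhalfNeg (N : ℕ) (t : ℝ) : Matrix (Fin N) (Fin N) ℂ :=
  Matrix.diagonal fun i => (t : ℂ) ^ (-((((N - 1 - (i : ℕ) : ℕ) : ℂ)) / 2))

/-- `A₂(t) = t (J - A t)`. -/
def matA2 (N : ℕ) (ν : ℕ → ℂ) (t : ℝ) : Matrix (Fin N) (Fin N) ℂ :=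
  (t : ℂ) • (matJ N - (t : ℂ) • matA N ν)

/-- Entries of powers of `A` vanish below the `n`-th superdiagonal. -/
lemma matA_pow_apply (N : ℕ) (ν : ℕ → ℂ) (n : ℕ) :
    ∀ i j : Fin N, (j : ℕ) < (i : ℕ) + n → (matA N ν ^ n) i j = 0 := by
  induction n with
  | zero =>
    intro i j hij
    simp only [pow_zero, Matrix.one_apply]
    rw [if_neg]
    intro h; subst h; omega
  | succ n ih =>
    intro i j hij
    rw [pow_succ, Matrix.mul_apply]
    apply Finset.sum_eq_zero
    intro k _
    by_cases hk : (k : ℕ) < (i : ℕ) + n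
    · rw [ih i k hk, zero_mul]
    · have : (matA N ν) k j = 0 := by
        simp only [matA, Matrix.of_apply]
        rw [if_neg]
        omega
      rw [this, mul_zero]

lemma matA_pow_N (N : ℕ) (ν : ℕ → ℂ) : matA N ν ^ N = 0 := by
  ext i j
  rw [matA_pow_apply N ν N i j (by omega)]
  rfl

/-- The basic commutation relation `J A = A J + A`. -/
lemma matJ_mul_matA (N : ℕ) (ν : ℕ → ℂ) :
    matJ N * matA N ν = matA N ν * matJ N + matA N ν := by
  ext i j
  by_cases h : (j : ℕ) = (i : ℕ) + 1
  · simp only [matJ, Matrix.diagonal_mul, Matrix.mul_diagonal, Matrix.add_apply, matA,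
      Matrix.of_apply, if_pos h]
    have hj : (j : ℕ) < N := j.isLt
    have h1 : (N - 1 - (i : ℕ)) = (N - 1 - (j : ℕ)) + 1 := by omega
    rw [h1]
    push_cast
    ring
  · simp only [matJ, Matrix.diagonal_mul, Matrix.mul_diagonal, Matrix.add_apply, matA,
      Matrix.of_apply, if_neg h]
    ring

theorem conj_A2_eq_tJ (N : ℕ) (ν : ℕ → ℂ)
    (hν : ∀ i, 1 ≤ i → i ≤ N - 1 → ν i ≠ 0) (t : ℝ) (ht : 0 < t) :
    tJhalfNeg N t * NormedSpace.exp (-(t : ℂ) • matA N ν) * matA2 N ν t *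
        NormedSpace.exp ((t : ℂ) • matA N ν) * tJhalf N t = (t : ℂ) • matJ N ∧
      (tJhalfNeg N t * NormedSpace.exp (-(t : ℂ) • matA N ν) * matA2 N ν t *
        NormedSpace.exp ((t : ℂ) • matA N ν) * tJhalf N t).IsHermitian := by
  set X : Matrix (Fin N) (Fin N) ℂ := (t : ℂ) • matA N ν with hX
  -- J X = X J + X
  have hJX : matJ N * X = X * matJ N + X := by
    rw [hX, Matrix.mul_smul, Matrix.smul_mul, matJ_mul_matA, smul_add]
  -- J X^n = X^n J + n • X^n
  have hJXn : ∀ n : ℕ, matJ N * X ^ n = X ^ n * matJ N + (n : ℂ) • X ^ n := by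
    intro n
    induction n with
    | zero => simp
    | succ n ih =>
      rw [pow_succ, ← Matrix.mul_assoc, ih, Matrix.add_mul, Matrix.smul_mul,
        Matrix.mul_assoc, hJX, Matrix.mul_add, ← Matrix.mul_assoc, ← pow_succ]
      push_cast
      rw [add_smul, one_smul]
      abel
  -- nilpotency of X
  have hXN : X ^ N = 0 := by
    rw [hX, smul_pow, matA_pow_N, smul_zero]
  have hXn : ∀ n : ℕ, N ≤ n → X ^ n = 0 := by
    intro n hn
    rw [← Nat.sub_add_cancel hn, pow_add, hXN, mul_zero]
  -- finite-sum formula for exp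
  have hE : NormedSpace.exp X = ∑ n ∈ Finset.range N, (n.factorial : ℂ)⁻¹ • X ^ n := by
    rw [NormedSpace.exp_eq_tsum ℂ]
    exact tsum_eq_sum (by
      intro n hn
      rw [hXn n (by simpa using hn), smul_zero])
  -- key: J * exp X = exp X * J + X * exp X
  have hJE : matJ N * NormedSpace.exp X =
      NormedSpace.exp X * matJ N + X * NormedSpace.exp X := by
    rcases Nat.eq_zero_or_pos N with h0 | hNpos
    · subst h0; exact Subsingleton.elim _ _
    obtain ⟨K, rfl⟩ : ∃ K, N = K + 1 := ⟨N - 1, by omega⟩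
    rw [hE, Finset.mul_sum, Finset.sum_mul, Finset.mul_sum]
    simp only [Matrix.mul_smul, Matrix.smul_mul, hJXn, smul_add]
    rw [Finset.sum_add_distrib]
    congr 1
    -- ∑ n!⁻¹ • (n • X^n) = ∑ n!⁻¹ • (X * X^n)
    rw [Finset.sum_range_succ' (fun n => (n.factorial : ℂ)⁻¹ • ((n : ℂ) • X ^ n)),
      Finset.sum_range_succ (fun n => (n.factorial : ℂ)⁻¹ • (X * X ^ n))]
    have hlast : X * X ^ K = 0 := by
      rw [← pow_succ', hXn (K + 1) le_rfl]
    rw [hlast, smul_zero, add_zero]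
    simp only [Nat.cast_zero, zero_smul, smul_zero, add_zero]
    refine Finset.sum_congr rfl fun i _ => ?_
    rw [← pow_succ', smul_smul]
    congr 1
    have h1 : ((i + 1).factorial : ℂ) = ((i : ℂ) + 1) * (i.factorial : ℂ) := by
      rw [Nat.factorial_succ]; push_cast; ring
    have h3 : ((i : ℂ) + 1) ≠ 0 := Nat.cast_add_one_ne_zero i
    have h2 : ((i + 1).factorial : ℂ) ≠ 0 := Nat.cast_ne_zero.mpr (Nat.factorial_ne_zero _)
    have h4 : (i.factorial : ℂ) ≠ 0 := Nat.cast_ne_zero.mpr (Nat.factorial_ne_zero _)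
    field_simp
    push_cast [Nat.factorial_succ]
    ring
  -- A₂ * exp X = exp X * (t • J)
  have hA2E : matA2 N ν t * NormedSpace.exp X =
      NormedSpace.exp X * ((t : ℂ) • matJ N) := by
    rw [matA2, ← hX, Matrix.smul_mul, Matrix.sub_mul, hJE, Matrix.mul_smul]
    rw [add_sub_cancel_right]
  -- exp(-X) * exp X = 1
  have hEinv : NormedSpace.exp (-(t : ℂ) • matA N ν) * NormedSpace.exp X = 1 := by
    have h : (-(t : ℂ)) • matA N ν = -X := by rw [hX, neg_smul]
    rw [h, ← Matrix.exp_add_of_commute (-X) X (Commute.neg_left (Commute.refl X)),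
      neg_add_cancel, NormedSpace.exp_zero]
  have hmain : tJhalfNeg N t * NormedSpace.exp (-(t : ℂ) • matA N ν) * matA2 N ν t *
      NormedSpace.exp ((t : ℂ) • matA N ν) * tJhalf N t = (t : ℂ) • matJ N := by
    rw [Matrix.mul_assoc (tJhalfNeg N t * NormedSpace.exp (-(t : ℂ) • matA N ν))]
    rw [← hX, hA2E, ← Matrix.mul_assoc, Matrix.mul_assoc (tJhalfNeg N t), hEinv,
      Matrix.mul_one]
    -- now: tJhalfNeg * (t • J) * tJhalf = t • J
    rw [tJhalfNeg, tJhalf, matJ, Matrix.mul_smul, Matrix.smul_mul,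
      Matrix.diagonal_mul_diagonal, Matrix.diagonal_mul_diagonal]
    congr 1
    ext i j
    rw [Matrix.diagonal_apply, Matrix.diagonal_apply]
    split_ifs with hij
    · subst hij
      have htne : (t : ℂ) ≠ 0 := by
        simp only [ne_eq, Complex.ofReal_eq_zero]
        exact ne_of_gt ht
      have hne : (t : ℂ) ^ ((((N - 1 - (i : ℕ) : ℕ) : ℂ)) / 2) ≠ 0 := by
        rw [ne_eq, Complex.cpow_eq_zero_iff]
        simp [htne]
      rw [Complex.cpow_neg]
      field_simp
    · rfl
  refine ⟨hmain, ?_⟩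
  rw [hmain, Matrix.IsHermitian]
  ext i j
  simp only [Matrix.conjTranspose_apply, Matrix.smul_apply, matJ, Matrix.diagonal_apply,
    smul_ite, smul_zero]
  by_cases h : i = j
  · subst h
    simp [Complex.star_def, Complex.conj_ofReal, smul_eq_mul]
  · rw [if_neg (fun hh => h hh.symm), if_neg h, star_zero]
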